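/- If X_k is defined by X_0 = 1 and X_k = X_{k-1} + β(X_{k-1}·ξ − ∂_ξ X_{k-1}) for a real parameter β ≠ 0, then X_k = β^k · H_k(β^{-1} + ξ), where H_k is the k-th Hermite polynomial. -/

import Mathlib

open Polynomial in
private lemma aux_H_eq (H : ℕ → ℝ → ℝ)
    (hH0 : ∀ x, H 0 x = 1)
    (hHrec : ∀ k x, H (k + 1) x = x * H k x - deriv (H k) x) :
    ∀ k x, H k x = ((hermite k).map (Int.castRingHom ℝ)).eval x := by
  intro k
  induction k with
  | zero => intro x; simp [hH0, hermite_zero]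
  | succ k ih =>
    intro x
    have hfun : H k = fun x => ((hermite k).map (Int.castRingHom ℝ)).eval x :=
      funext ih
    rw [hHrec, ih, hfun, Polynomial.deriv, hermite_succ]
    simp [Polynomial.derivative_map]

/-- If `X 0 = 1` and `X k = X (k-1) + β * (X (k-1) * ξ - ∂_ξ X (k-1))` for a real
parameter `β ≠ 0`, then `X k ξ = β ^ k * H k (β⁻¹ + ξ)`, where `H k` is the `k`-th
Hermite polynomial (with `H 0 = 1` and `H (k+1) x = x * H k x - H k' x`). -/
theorem skorokhod_affine_recursion_eq_hermite
    (H : ℕ → ℝ → ℝ)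
    (hH0 : ∀ x, H 0 x = 1)
    (hHrec : ∀ k x, H (k + 1) x = x * H k x - deriv (H k) x)
    (β : ℝ) (hβ : β ≠ 0)
    (X : ℕ → ℝ → ℝ)
    (hX0 : ∀ x, X 0 x = 1)
    (hXrec : ∀ k x, X (k + 1) x = X k x + β * (X k x * x - deriv (X k) x)) :
    ∀ (k : ℕ) (x : ℝ), X k x = β ^ k * H k (β⁻¹ + x) := by
  set hr : ℕ → Polynomial ℝ := fun k => (Polynomial.hermite k).map (Int.castRingHom ℝ)
  have hHeq := aux_H_eq H hH0 hHrec
  -- main induction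
  have key : ∀ k x, X k x = β ^ k * (hr k).eval (β⁻¹ + x) := by
    intro k
    induction k with
    | zero => intro x; simp [hX0, hr, Polynomial.hermite_zero]
    | succ k ih =>
      intro x
      have hfun : X k = fun x => β ^ k * (hr k).eval (β⁻¹ + x) := funext ih
      have hder : deriv (X k) x = β ^ k * (Polynomial.derivative (hr k)).eval (β⁻¹ + x) := by
        have h1 : HasDerivAt (fun x : ℝ => (hr k).eval (β⁻¹ + x))
            ((Polynomial.derivative (hr k)).eval (β⁻¹ + x)) x := by
          have h2 := (hr k).hasDerivAt (β⁻¹ + x)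
          have h3 : HasDerivAt (fun x : ℝ => β⁻¹ + x) 1 x :=
            (hasDerivAt_id x).const_add β⁻¹
          simpa [Function.comp_def] using h2.comp x h3
        rw [hfun]
        simpa using (h1.const_mul (β ^ k)).deriv
      rw [hXrec, ih, hder]
      have hsucc : hr (k + 1) = Polynomial.X * hr k - Polynomial.derivative (hr k) := by
        simp [hr, Polynomial.hermite_succ, Polynomial.derivative_map]
      rw [hsucc]
      have hβk : β ^ k = β ^ (k + 1) * β⁻¹ := by
        field_simp [pow_succ]
        ring
      simp only [Polynomial.eval_sub, Polynomial.eval_mul, Polynomial.eval_X]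
      rw [hβk]
      field_simp
      ring
  intro k x
  rw [key, hHeq]
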